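/- arXiv:2401.09164 — 3 statements merged into one kernel-verified Lean document; each statement's English description precedes it below -/
import Mathlib

section
/- Let $\varphi\in(0,\pi/2)$, $b\in S^{n-1}$, $r\in(0,\cos\varphi)$, $a\in(0,1)$. Then the Euclidean distance from the truncated cone $R(b,\varphi,ar,r)$ to the unit sphere $S^{n-1}$ satisfies $d(R(b,\varphi,ar,r),\partial\mathbb{B}^n) \geq \frac{ar(2\cos\varphi - ar)}{2+ar}$. -/
open Real Metric

/-- The Euclidean distance from the truncated cone `R(b,φ,ar,r)` is at least `ar(2cos φ − ar)/(2+ar)`. -/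
theorem stmt2 (n : ℕ) (hn : 2 ≤ n) (b : EuclideanSpace ℝ (Fin n)) (hb : ‖b‖ = 1)
    (φ r a : ℝ) (hφ : φ ∈ Set.Ioo 0 (π / 2)) (hr : r ∈ Set.Ioo 0 (Real.cos φ))
    (ha : a ∈ Set.Ioo (0 : ℝ) 1)
    (C : Set (EuclideanSpace ℝ (Fin n)))
    (hC : C = {x | ‖b - x‖ * Real.cos φ < inner ℝ b (b - x)} ∩ ball b (Real.cos φ))
    (R : Set (EuclideanSpace ℝ (Fin n)))
    (hR : R = (ball b r \ closedBall b (a * r)) ∩ C) :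
    ∀ x ∈ R, a * r * (2 * Real.cos φ - a * r) / (2 + a * r) ≤ 1 - ‖x‖ := by
  intro x hx
  subst hR hC
  obtain ⟨⟨hball, hcball⟩, hcone, _⟩ := hx
  rw [mem_ball, dist_eq_norm] at hball
  rw [mem_closedBall, dist_eq_norm, not_le] at hcball
  set t := ‖b - x‖ with hT
  have htnorm : ‖x - b‖ = t := by rw [hT, norm_sub_rev]
  rw [htnorm] at hball hcball
  have hc : 0 < Real.cos φ := Real.cos_pos_of_mem_Ioo ⟨by linarith [hφ.1, pi_pos], hφ.2⟩
  have hr0 : 0 < r := hr.1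
  have hrc : r < Real.cos φ := hr.2
  have ha0 : 0 < a := ha.1
  have ha1 : a < 1 := ha.2
  have har : a * r < t := hcball
  have htr : t < r := hball
  have hinner : t * Real.cos φ < inner ℝ b (b - x) := hcone
  have hsq : ‖x‖ ^ 2 = 1 - 2 * inner ℝ b (b - x) + t ^ 2 := by
    have h1 : b - (b - x) = x := by abel
    have h2 := norm_sub_sq_real b (b - x)
    rw [h1, hb] at h2
    rw [h2]; ring
  have hx2 : ‖x‖ ^ 2 < 1 - t * (2 * Real.cos φ - t) := by
    rw [hsq]; nlinarith
  have hkey : a * r * (2 * Real.cos φ - a * r) ≤ t * (2 * Real.cos φ - t) := by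
    nlinarith [mul_pos ha0 hr0]
  have hxlt : ‖x‖ < 1 := by
    nlinarith [norm_nonneg x, mul_pos ha0 hr0]
  rw [div_le_iff₀ (by nlinarith [mul_pos ha0 hr0])]
  nlinarith [norm_nonneg x, mul_pos ha0 hr0]
end

section
/- Let $\varphi\in(0,\pi/2)$, $b\in S^{n-1}$, $r\in(0,\cos\varphi)$, $a\in(0,1)$. Then the diameter of $R(b,\varphi,ar,r)$ in the distance ratio metric $j_{\mathbb{B}^n}$ satisfies $$\sup_{x,y\in R(b,\varphi,ar,r)} \log\Big(1+\frac{|x-y|}{\min\{1-|x|,1-|y|\}}\Big) \leq \log\Big(1+\frac{(2+ar)u(a,\varphi)}{a(2\cos\varphi - ar)}\Big),$$ where $u(a,\varphi)=\sqrt{(1+a)^2\tan^2\varphi+(1-a)^2}$. -/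
open Real Metric RealInnerProductSpace

lemma quad_le (K A C B l rr x : ℝ) (hK : 0 ≤ K) (hlr : l < rr)
    (hx1 : l ≤ x) (hx2 : x ≤ rr)
    (hl : K*l^2 + A*l + C ≤ B) (hr : K*rr^2 + A*rr + C ≤ B) :
    K*x^2 + A*x + C ≤ B := by
  have t1 : 0 ≤ (rr - x) * (B - (K*l^2+A*l+C)) :=
    mul_nonneg (by linarith) (by linarith)
  have t2 : 0 ≤ (x - l) * (B - (K*rr^2+A*rr+C)) :=
    mul_nonneg (by linarith) (by linarith)
  have t3 : 0 ≤ K * ((rr - l) * ((rr - x) * (x - l))) :=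
    mul_nonneg hK (mul_nonneg (by linarith) (mul_nonneg (by linarith) (by linarith)))
  have hmul : (rr - l) * (K*x^2+A*x+C) ≤ (rr - l) * B := by linarith
  exact le_of_mul_le_mul_left hmul (by linarith)

lemma keypoly (a r c s t : ℝ) (ha : 0 < a) (ha1 : a < 1) (hr : 0 < r)
    (hc : 0 < c) (hc1 : c < 1)
    (hs1 : a*r ≤ s) (hs2 : s ≤ r) (ht1 : a*r ≤ t) (ht2 : t ≤ r) :
    (s^2 + t^2 - 2*(s*t*(2*c^2-1))) * c^2 ≤
      r^2 * ((1-a)^2*c^2 + (1+a)^2*(1-c^2)) := by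
  have hlr : a*r < r := by nlinarith
  have corner : ∀ s', (s' = a*r ∨ s' = r) → ∀ t', a*r ≤ t' → t' ≤ r →
      (s'^2 + t'^2 - 2*(s'*t'*(2*c^2-1))) * c^2 ≤
        r^2 * ((1-a)^2*c^2 + (1+a)^2*(1-c^2)) := by
    intro s' hs' t' h1 h2
    have h := quad_le (c^2) (-2*s'*(2*c^2-1)*c^2) (s'^2*c^2)
      (r^2 * ((1-a)^2*c^2 + (1+a)^2*(1-c^2))) (a*r) r t' (by positivity) hlr h1 h2
      ?_ ?_
    · linarith [h]
    · rcases hs' with rfl | rfl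
      · nlinarith [sq_nonneg (2*c^2 - (1+a)), sq_nonneg r, mul_pos hr hr,
          mul_nonneg (mul_nonneg (mul_pos hr hr).le (mul_pos hc hc).le)
            (mul_nonneg (by nlinarith : (0:ℝ) ≤ 1 - c^2) (by nlinarith : (0:ℝ) ≤ 1 - a^2)),
          mul_nonneg (mul_pos hr hr).le (sq_nonneg (2*c^2 - (1+a)))]
      · nlinarith [mul_nonneg (mul_nonneg (mul_pos hr hr).le (by nlinarith : (0:ℝ) ≤ 1 - c^2))
            (by nlinarith [sq_nonneg (1-a), mul_nonneg ha.le (by nlinarith : (0:ℝ) ≤ 1 - c^2)] : (0:ℝ) ≤ (1+a)^2 - 4*a*c^2),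
          mul_nonneg (mul_pos hr hr).le (sq_nonneg (2*c^2 - (1+a)))]
    · rcases hs' with rfl | rfl
      · nlinarith [mul_nonneg (mul_nonneg (mul_pos hr hr).le (by nlinarith : (0:ℝ) ≤ 1 - c^2))
            (by nlinarith [sq_nonneg (1-a), mul_nonneg ha.le (by nlinarith : (0:ℝ) ≤ 1 - c^2)] : (0:ℝ) ≤ (1+a)^2 - 4*a*c^2),
          mul_nonneg (mul_pos hr hr).le (sq_nonneg (2*c^2 - (1+a)))]
      · nlinarith [mul_nonneg (mul_pos hr hr).le (sq_nonneg (2*c^2 - (1+a)))]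
  have h := quad_le (c^2) (-2*t*(2*c^2-1)*c^2) (t^2*c^2)
    (r^2 * ((1-a)^2*c^2 + (1+a)^2*(1-c^2))) (a*r) r s (by positivity) hlr hs1 hs2
    (by linarith [corner (a*r) (Or.inl rfl) t ht1 ht2])
    (by linarith [corner r (Or.inr rfl) t ht1 ht2])
  linarith [h]

section twopt

variable {F : Type*} [NormedAddCommGroup F] [InnerProductSpace ℝ F]

lemma perp_sq (b p : F) (hb : ‖b‖ = 1) :
    ‖p - (⟪b, p⟫ : ℝ) • b‖ ^ 2 = ‖p‖^2 - (⟪b, p⟫ : ℝ)^2 := by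
  have epb : (⟪p, b⟫ : ℝ) = (⟪b, p⟫ : ℝ) := real_inner_comm b p
  rw [norm_sub_sq_real, real_inner_smul_right, epb, norm_smul, hb, Real.norm_eq_abs]
  simp only [mul_one, sq_abs]
  ring

lemma expand_inner (b p q : F) (hb : ‖b‖ = 1) :
    (⟪p - (⟪b, p⟫ : ℝ) • b, q - (⟪b, q⟫ : ℝ) • b⟫ : ℝ) = (⟪p, q⟫ : ℝ) - (⟪b, p⟫ : ℝ) * (⟪b, q⟫ : ℝ) := by
  have hbb : (⟪b, b⟫ : ℝ) = 1 := by
    rw [real_inner_self_eq_norm_sq, hb]; norm_num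
  have epb : (⟪p, b⟫ : ℝ) = (⟪b, p⟫ : ℝ) := real_inner_comm b p
  rw [inner_sub_left, inner_sub_right, inner_sub_right, real_inner_smul_left,
    real_inner_smul_left, real_inner_smul_right, real_inner_smul_right, hbb, epb]
  ring

lemma two_pt (b p q : F) (hb : ‖b‖ = 1) {c : ℝ} (hc : 0 < c) (hc1 : c ≤ 1)
    (hp : ‖p‖ * c ≤ (⟪b, p⟫ : ℝ)) (hq : ‖q‖ * c ≤ (⟪b, q⟫ : ℝ)) :
    ‖q - p‖^2 ≤ ‖p‖^2 + ‖q‖^2 - 2*(‖p‖*‖q‖*(2*c^2-1)) := by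
  have hs0 : (0:ℝ) ≤ ‖p‖ := norm_nonneg p
  have ht0 : (0:ℝ) ≤ ‖q‖ := norm_nonneg q
  have hα0 : (0:ℝ) ≤ (⟪b, p⟫ : ℝ) := le_trans (by positivity) hp
  have hβ0 : (0:ℝ) ≤ (⟪b, q⟫ : ℝ) := le_trans (by positivity) hq
  have hpx2 := perp_sq b p hb
  have hpy2 := perp_sq b q hb
  have hexp := expand_inner b p q hb
  have hiw := abs_le.1 (abs_real_inner_le_norm (p - (⟪b, p⟫ : ℝ) • b) (q - (⟪b, q⟫ : ℝ) • b))
  have hd : ‖q - p‖^2 = ‖q‖^2 - 2*(⟪p, q⟫ : ℝ) + ‖p‖^2 := by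
    rw [norm_sub_sq_real, real_inner_comm q p]
  have hc2' : (0:ℝ) ≤ 1 - c^2 := by nlinarith
  have h1 : ‖p - (⟪b, p⟫ : ℝ) • b‖^2 ≤ ‖p‖^2*(1-c^2) := by
    nlinarith [hpx2, hp, hs0, hc, mul_nonneg hs0 hc.le]
  have h2 : ‖q - (⟪b, q⟫ : ℝ) • b‖^2 ≤ ‖q‖^2*(1-c^2) := by
    nlinarith [hpy2, hq, ht0, hc, mul_nonneg ht0 hc.le]
  have hprod : ‖p - (⟪b, p⟫ : ℝ) • b‖ * ‖q - (⟪b, q⟫ : ℝ) • b‖ ≤ ‖p‖*‖q‖*(1-c^2) := by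
    nlinarith [h1, h2, norm_nonneg (p - (⟪b, p⟫ : ℝ) • b), norm_nonneg (q - (⟪b, q⟫ : ℝ) • b),
      mul_nonneg (mul_nonneg hs0 ht0) hc2',
      mul_nonneg (norm_nonneg (p - (⟪b, p⟫ : ℝ) • b)) (norm_nonneg (q - (⟪b, q⟫ : ℝ) • b))]
  have h4 : (‖p‖*c)*(‖q‖*c) ≤ (⟪b, p⟫ : ℝ) * (⟪b, q⟫ : ℝ) :=
    mul_le_mul hp hq (by positivity) hα0
  linarith [hd, hexp, hiw.1, hprod, h4]

end twopt

set_option maxHeartbeats 2000000 in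
/-- Diameter bound for `R(b,φ,ar,r)` in the distance ratio metric `j_{𝔹ⁿ}`. -/
theorem stmt3 (n : ℕ) (hn : 2 ≤ n) (b : EuclideanSpace ℝ (Fin n)) (hb : ‖b‖ = 1)
    (φ r a : ℝ) (hφ : φ ∈ Set.Ioo 0 (π / 2)) (hr : r ∈ Set.Ioo 0 (Real.cos φ))
    (ha : a ∈ Set.Ioo (0 : ℝ) 1)
    (C : Set (EuclideanSpace ℝ (Fin n)))
    (hC : C = {x | ‖b - x‖ * Real.cos φ < inner ℝ b (b - x)} ∩ ball b (Real.cos φ))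
    (R : Set (EuclideanSpace ℝ (Fin n)))
    (hR : R = (ball b r \ closedBall b (a * r)) ∩ C)
    (u : ℝ) (hu : u = Real.sqrt ((1 + a) ^ 2 * Real.tan φ ^ 2 + (1 - a) ^ 2)) :
    ∀ x ∈ R, ∀ y ∈ R,
      Real.log (1 + ‖x - y‖ / min (1 - ‖x‖) (1 - ‖y‖)) ≤
        Real.log (1 + (2 + a * r) * u / (a * (2 * Real.cos φ - a * r))) := by
  obtain ⟨hφ0, hφ2⟩ := hφ
  obtain ⟨hr0, hrc⟩ := hr
  obtain ⟨ha0, ha1⟩ := ha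
  have hc : 0 < Real.cos φ := Real.cos_pos_of_mem_Ioo ⟨by linarith [pi_div_two_pos], hφ2⟩
  have hsφ : 0 < Real.sin φ := Real.sin_pos_of_pos_of_lt_pi hφ0 (by linarith [pi_pos])
  have hpyth := Real.sin_sq_add_cos_sq φ
  have hc1 : Real.cos φ < 1 := by nlinarith [Real.cos_le_one φ]
  generalize hcdef : Real.cos φ = c at hrc hc hpyth hc1 hC ⊢
  have hu0 : 0 ≤ u := hu ▸ Real.sqrt_nonneg _
  have hu2 : u ^ 2 = (1 + a) ^ 2 * ((1 - c^2)/c^2) + (1 - a) ^ 2 := by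
    rw [hu, Real.sq_sqrt (by positivity), Real.tan_eq_sin_div_cos, div_pow]
    have : Real.sin φ ^ 2 = 1 - c^2 := by linarith
    rw [this, hcdef]
  have har : a * r < r := by nlinarith
  -- facts for each point of R
  have key : ∀ z ∈ R, a * r < ‖b - z‖ ∧ ‖b - z‖ < r ∧
      ‖b - z‖ * c < ⟪b, b - z⟫ ∧ ⟪b, b - z⟫ ≤ ‖b - z‖ ∧
      ‖z‖ ^ 2 = 1 - 2 * ⟪b, b - z⟫ + ‖b - z‖ ^ 2 ∧
      a * r * (2 * c - a * r) / 2 ≤ 1 - ‖z‖ := by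
    intro z hz
    rw [hR] at hz
    obtain ⟨⟨hz1, hz2⟩, hz3⟩ := hz
    rw [mem_ball, dist_eq_norm, norm_sub_rev z b] at hz1
    rw [mem_closedBall, dist_eq_norm, norm_sub_rev z b, not_le] at hz2
    rw [hC] at hz3
    obtain ⟨hz3, -⟩ := hz3
    simp only [Set.mem_setOf_eq] at hz3
    have hαle : ⟪b, b - z⟫ ≤ ‖b - z‖ := by
      have := real_inner_le_norm b (b - z)
      simpa [hb] using this
    have hz4 : ‖z‖ ^ 2 = 1 - 2 * ⟪b, b - z⟫ + ‖b - z‖ ^ 2 := by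
      have h1 : z = b - (b - z) := by abel
      calc ‖z‖ ^ 2 = ‖b - (b - z)‖ ^ 2 := by rw [← h1]
        _ = ‖b‖^2 - 2 * ⟪b, b - z⟫ + ‖b - z‖^2 := by rw [norm_sub_sq_real]
        _ = 1 - 2 * ⟪b, b - z⟫ + ‖b - z‖ ^ 2 := by rw [hb]; ring
    refine ⟨hz2, hz1, hz3, hαle, hz4, ?_⟩
    have hn0 : 0 ≤ ‖z‖ := norm_nonneg z
    have hs0 : 0 < ‖b - z‖ := lt_trans (by positivity) hz2
    nlinarith [sq_nonneg (1 - ‖z‖),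
      mul_nonneg (sub_nonneg.2 hz2.le) (by nlinarith : (0:ℝ) ≤ 2*c - ‖b - z‖ - a*r),
      mul_pos hs0 hc]
  intro x hx y hy
  obtain ⟨hx1, hx2, hx3, hx4, hx5, hx6⟩ := key x hx
  obtain ⟨hy1, hy2, hy3, hy4, hy5, hy6⟩ := key y hy
  have hdist2' := two_pt b (b - x) (b - y) hb hc hc1.le hx3.le hy3.le
  have hxy : (b - y) - (b - x) = x - y := by abel
  rw [hxy] at hdist2'
  have hdist2 : ‖x - y‖^2 ≤ ‖b - x‖^2 + ‖b - y‖^2 -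
      2*(‖b - x‖*‖b - y‖*(2*c^2-1)) := hdist2'
  have hdxyn : (0:ℝ) ≤ ‖x - y‖ := norm_nonneg _
  have hru : ‖x - y‖ ≤ r * u := by
    have hkp := keypoly a r c (‖b - x‖) (‖b - y‖) ha0 ha1 hr0 hc hc1
      hx1.le hx2.le hy1.le hy2.le
    have hc2 : (0:ℝ) < c^2 := by positivity
    have h5 : ‖x - y‖^2 ≤ (r*u)^2 := by
      have hru2 : (r*u)^2 = r^2*((1-a)^2*c^2 + (1+a)^2*(1-c^2))/c^2 := by
        rw [mul_pow, hu2]; field_simp; ring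
      rw [hru2, le_div_iff₀ hc2]
      calc ‖x - y‖^2 * c^2
          ≤ (‖b - x‖^2 + ‖b - y‖^2 - 2*(‖b - x‖*‖b - y‖*(2*c^2-1)))*c^2 := by
            nlinarith [hdist2, hc2]
        _ ≤ _ := hkp
    nlinarith [h5, hdxyn, mul_nonneg hr0.le hu0]
  have h2c : 0 < 2*c - a*r := by linarith
  have hM0 : 0 < a*r*(2*c - a*r)/2 := div_pos (mul_pos (mul_pos ha0 hr0) h2c) two_pos
  have hm : a*r*(2*c-a*r)/2 ≤ min (1-‖x‖) (1-‖y‖) := le_min hx6 hy6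
  have hm0 : 0 < min (1-‖x‖) (1-‖y‖) := lt_of_lt_of_le hM0 hm
  have hD : 0 < a*(2*c-a*r) := mul_pos ha0 h2c
  have hfrac : ‖x - y‖ / min (1-‖x‖) (1-‖y‖) ≤ (2+a*r)*u/(a*(2*c-a*r)) := by
    have h6 : ‖x - y‖ / min (1-‖x‖) (1-‖y‖) ≤ (r*u)/(a*r*(2*c-a*r)/2) :=
      div_le_div₀ (by positivity) hru hM0 hm
    have h7 : (r*u)/(a*r*(2*c-a*r)/2) = 2*u/(a*(2*c-a*r)) := by
      field_simp
    have h8 : 2*u/(a*(2*c-a*r)) ≤ (2+a*r)*u/(a*(2*c-a*r)) :=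
      (div_le_div_iff_of_pos_right hD).2 (by nlinarith [mul_nonneg (mul_nonneg ha0.le hr0.le) hu0])
    rw [h7] at h6
    linarith [h6, h8]
  have hpos : 0 < 1 + ‖x - y‖ / min (1-‖x‖) (1-‖y‖) := by
    have := div_nonneg hdxyn hm0.le
    linarith
  exact Real.log_le_log hpos (by linarith)
end

section
/- Let $b\in S^{n-1}$, $\varphi\in(0,\pi/2)$, and $x\in C(b,\varphi)$ with $r:=|x-b|\in(0,\cos\varphi)$. Then $\rho(0,x) \leq s(r,\varphi) := \log\Big(\frac{(2+r)^2}{r(2\cos\varphi - r)}\Big)$, where $\rho(0,x)=\log\frac{1+|x|}{1-|x|}$. -/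
open Real Metric

/-- For `x ∈ C(b,φ)` with `r = |x−b| ∈ (0, cos φ)`,
`ρ(0,x) = log((1+|x|)/(1−|x|)) ≤ s(r,φ) = log((2+r)²/(r(2cos φ − r)))`. -/
theorem stmt6 (n : ℕ) (hn : 2 ≤ n) (b : EuclideanSpace ℝ (Fin n)) (hb : ‖b‖ = 1)
    (φ : ℝ) (hφ : φ ∈ Set.Ioo 0 (π / 2))
    (C : Set (EuclideanSpace ℝ (Fin n)))
    (hC : C = {x | ‖b - x‖ * Real.cos φ < inner ℝ b (b - x)} ∩ ball b (Real.cos φ))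
    (x : EuclideanSpace ℝ (Fin n)) (hx : x ∈ C)
    (r : ℝ) (hr : r = ‖x - b‖) (hr' : r ∈ Set.Ioo 0 (Real.cos φ)) :
    Real.log ((1 + ‖x‖) / (1 - ‖x‖)) ≤
      Real.log ((2 + r) ^ 2 / (r * (2 * Real.cos φ - r))) := by
  obtain ⟨hr0, hrc⟩ := hr'
  have hc : 0 < Real.cos φ := lt_of_lt_of_le hr0 hrc.le
  rw [hC] at hx
  obtain ⟨hx1, _⟩ := hx
  have hx1 : ‖b - x‖ * Real.cos φ < inner ℝ b (b - x) := hx1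
  have hbx : ‖b - x‖ = r := by rw [hr, ← norm_neg]; congr 1; abel
  -- expand ‖x‖²
  have hexp : ‖x‖ ^ 2 = ‖b‖ ^ 2 - 2 * inner ℝ b (b - x) + ‖b - x‖ ^ 2 := by
    have := @norm_sub_sq_real (EuclideanSpace ℝ (Fin n)) _ _ b (b - x)
    have hbb : b - (b - x) = x := by abel
    rw [hbb] at this
    exact this
  have hinner : r * Real.cos φ < inner ℝ b (b - x) := by rw [← hbx]; exact hx1
  have hx2 : ‖x‖ ^ 2 < 1 - r * (2 * Real.cos φ - r) := by
    rw [hexp, hb, hbx]; nlinarith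
  have ht : 0 < r * (2 * Real.cos φ - r) := by nlinarith
  have hxlt1 : ‖x‖ < 1 := by nlinarith [norm_nonneg x]
  have hxle : ‖x‖ ≤ 1 + r := by
    calc ‖x‖ = ‖b + (x - b)‖ := by congr 1; abel
    _ ≤ ‖b‖ + ‖x - b‖ := norm_add_le _ _
    _ = 1 + r := by rw [hb, hr]
  have hpos : 0 < (1 + ‖x‖) / (1 - ‖x‖) :=
    div_pos (by positivity) (by linarith)
  apply Real.log_le_log hpos
  rw [div_le_div_iff₀ (by linarith) ht]
  have h1 : (1 + ‖x‖) * (r * (2 * Real.cos φ - r)) ≤ (1 + ‖x‖) * (1 - ‖x‖ ^ 2) :=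
    mul_le_mul_of_nonneg_left (by linarith) (by positivity)
  have h2 : (1 + ‖x‖) ^ 2 * (1 - ‖x‖) ≤ (2 + r) ^ 2 * (1 - ‖x‖) := by
    apply mul_le_mul_of_nonneg_right _ (by linarith)
    apply pow_le_pow_left₀ (by positivity) (by linarith)
  nlinarith [norm_nonneg x]
end
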